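/- arXiv:2004.02252 — 4 statements merged into one kernel-verified Lean document; each statement's English description precedes it below -/
import Mathlib

section
/- Let (R, m, k) be a one-dimensional Cohen–Macaulay local ring with infinite residue field admitting a canonical module ω_R with R ⊆ ω_R ⊆ R̄, and assume R is not Gorenstein. Then R:ω_R = m:ω_R, and moreover R:ω_R is a module over the ring B = m:m. -/
/- Common definitions: fractional ideals in the total ring of fractions, canonical
ideals (via the Herzog–Kunz criterion), reductions, (almost) canonical ideals and
(almost) Gorenstein rings, for one-dimensional Cohen–Macaulay rings.
Throughout, the total ring of fractions `Q(R)` is `FractionRing R` and fractional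
ideals are submodules of it. -/

set_option maxHeartbeats 1600000
set_option synthInstance.maxHeartbeats 800000

noncomputable section

open IsLocalRing Submodule

/-- The `Localization S`-algebra structure on `A[S⁻¹]` (an instance in the older Mathlib). -/
noncomputable instance localizedModuleAlgebra {R : Type*} [CommSemiring R] {S : Submonoid R}
    {A : Type*} [Semiring A] [Algebra R A] : Algebra (Localization S) (LocalizedModule S A) :=
  Algebra.ofModule
    (fun r x y => by
      induction r using Localization.induction_on with | H r => ?_
      induction x using LocalizedModule.induction_on with | h a t => ?_
      induction y using LocalizedModule.induction_on with | h b u => ?_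
      rw [LocalizedModule.mk_smul_mk, LocalizedModule.mk_mul_mk, LocalizedModule.mk_mul_mk,
        LocalizedModule.mk_smul_mk, smul_mul_assoc, mul_assoc])
    (fun r x y => by
      induction r using Localization.induction_on with | H r => ?_
      induction x using LocalizedModule.induction_on with | h a t => ?_
      induction y using LocalizedModule.induction_on with | h b u => ?_
      rw [LocalizedModule.mk_smul_mk, LocalizedModule.mk_mul_mk, LocalizedModule.mk_mul_mk,
        LocalizedModule.mk_smul_mk, mul_smul_comm, mul_left_comm])

variable (T A : Type*) [CommRing T] [CommRing A] [Algebra T A]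

/-- The submodule of the `T`-algebra `A` generated by the image of an ideal of `T`. -/
def idealSub (I : Ideal T) : Submodule T A := Submodule.map (Algebra.linearMap T A) I

/-- The maximal ideal of the local ring `T`, viewed inside `A`. -/
def maxSub [IsLocalRing T] : Submodule T A := idealSub T A (maximalIdeal T)

/-- The Jacobson radical of `T`, viewed inside `A`. -/
def jacSub : Submodule T A := Submodule.map (Algebra.linearMap T A) ((⊥ : Ideal T).jacobson)

/-- The integral closure of `T` in `A`, as a submodule of `A`. -/
def intCl : Submodule T A := Subalgebra.toSubmodule (integralClosure T A)

/-- `I` is a fractional ideal of `T` inside `A` (`A` playing the role of the total ring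
of fractions of `T`): `I` contains an invertible element and has bounded denominators. -/
def IsFracIdeal (I : Submodule T A) : Prop :=
  (∃ u : Aˣ, (u : A) ∈ I) ∧ ∃ r ∈ nonZeroDivisors T, ∀ x ∈ I, r • x ∈ (1 : Submodule T A)

/-- The length `ℓ_T(N/I)` of the subquotient `N/(I ∩ N)`, defined as the Krull dimension
of its lattice of submodules. -/
def relLength (I N : Submodule T A) : WithBot ℕ∞ :=
  Order.krullDim (Submodule T (↥N ⧸ (I.comap N.subtype)))

/-- Herzog–Kunz criterion: a fractional ideal `ω` of `T` is a canonical module of `T` iff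
`ℓ_T((ω : n)/ω) = 1` for every maximal ideal `n` of `T`. -/
def IsCanonicalIdeal (ω : Submodule T A) : Prop :=
  IsFracIdeal T A ω ∧ ∀ n : Ideal T, n.IsMaximal → relLength T A ω (ω / idealSub T A n) = 1

/-- `z ∈ J` is a reduction of the fractional ideal `J`: `z J^n = J^{n+1}` for some `n`. -/
def IsReductionOf (z : A) (J : Submodule T A) : Prop :=
  z ∈ J ∧ ∃ n : ℕ, J ^ (n + 1) = span T {z} * J ^ n

/-- Almost canonical ideal over a local ring `T` (with respect to a canonical module `ω`,
`T ⊆ ω ⊆ T̄`): for a (regular) reduction `z` of `ω : I` one has `ω : (m:m) ⊆ zI`. -/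
def IsAlmostCanonicalLoc [IsLocalRing T] (ω I : Submodule T A) : Prop :=
  ∃ z : A, IsUnit z ∧ IsReductionOf T A z (ω / I) ∧
    ω / (maxSub T A / maxSub T A) ≤ span T {z} * I

/-- Almost canonical ideal over a (not necessarily local) ring: the localization at every
maximal ideal is an almost canonical ideal of the localized ring. -/
def IsAlmostCanonical (ω I : Submodule T A) : Prop :=
  ∀ (p : Ideal T) (hp : p.IsMaximal),
    letI := hp.isPrime
    IsAlmostCanonicalLoc (Localization.AtPrime p) (LocalizedModule p.primeCompl A)
      (ω.localized p.primeCompl) (I.localized p.primeCompl)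

/-- `S` is a discrete valuation ring. -/
def IsDVR (S : Type*) [CommRing S] : Prop :=
  ∃ h : IsDomain S, @IsDiscreteValuationRing S _ h

/-- A one-dimensional Cohen–Macaulay local ring `S` is almost Gorenstein if `m ω ⊆ m`
for a canonical module `S ⊆ ω ⊆ S̄` of `S`. -/
def IsAlmostGorensteinLoc (S : Type*) [CommRing S] [IsLocalRing S] : Prop :=
  ∃ ω : Submodule S (FractionRing S),
    IsCanonicalIdeal S (FractionRing S) ω ∧ 1 ≤ ω ∧
      ω ≤ intCl S (FractionRing S) ∧
      maxSub S (FractionRing S) * ω ≤ maxSub S (FractionRing S)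

/-- A ring is almost Gorenstein if its localization at every maximal ideal is. -/
def IsAlmostGorenstein (S : Type*) [CommRing S] : Prop :=
  ∀ (p : Ideal S) (hp : p.IsMaximal),
    letI := hp.isPrime
    IsAlmostGorensteinLoc (Localization.AtPrime p)

/-- A minimal system of generators of the maximal ideal of a local ring. -/
def IsMinGenSys (S : Type*) [CommRing S] [IsLocalRing S] {n : ℕ} (g : Fin n → S) : Prop :=
  Ideal.span (Set.range g) = maximalIdeal S ∧
    ∀ i : Fin n, Ideal.span (g '' {j | j ≠ i}) ≠ maximalIdeal S

/-- `R` is a generalized almost Gorenstein local (gAGL) ring, with respect to the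
canonical module `ω` and the ring `B = m:m`: `m ω J(B) ⊆ R`. -/
def IsGAGL (R : Type*) [CommRing R] [IsLocalRing R] (ω : Submodule R (FractionRing R))
    (B : Subalgebra R (FractionRing R)) : Prop :=
  maxSub R (FractionRing R) * ω *
      ((jacSub ↥B (FractionRing R)).restrictScalars R) ≤ 1

/-- `1` is a reduction of the localization `J_p` of the fractional ideal `J` at the
submonoid `p` (for `p` the complement of a maximal ideal, this is the localization of
`J` at that maximal ideal): `1 ∈ J_p` and `(J_p)^{n+1} = (J_p)^n` for some `n`. -/
def IsOneReductionOfLocalization (p : Submonoid T) (J : Submodule T A) : Prop :=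
  (1 : LocalizedModule p A) ∈ J.localized p ∧
    ∃ n : ℕ, (J.localized p) ^ (n + 1) = (J.localized p) ^ n

open Polynomial in
theorem my_aux_inv_mem {R A : Type*} [CommRing R] [CommRing A] [Algebra R A] {z : A} {r : R}
    (hz : IsIntegral R z) (h : z * algebraMap R A r = 1) :
    ∃ s : R, algebraMap R A s = z := by
  rcases subsingleton_or_nontrivial A with hs | hn
  · exact ⟨0, Subsingleton.elim _ _⟩
  obtain ⟨p, hm, hp⟩ := hz
  set n := p.natDegree with hndef
  have hn1 : 1 ≤ n := by
    rcases Nat.eq_zero_or_pos n with h0 | h1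
    · exfalso
      have hp1 : p = 1 := hm.natDegree_eq_zero.mp h0
      rw [hp1] at hp
      simp only [Polynomial.eval₂_one] at hp
      exact one_ne_zero hp
    · exact h1
  rw [hm.as_sum] at hp
  simp only [map_add, map_sum, map_mul, map_pow, Polynomial.aeval_X, Polynomial.aeval_C,
    Polynomial.eval₂_add, Polynomial.eval₂_finset_sum, Polynomial.eval₂_mul, Polynomial.eval₂_pow,
    Polynomial.eval₂_X, Polynomial.eval₂_C] at hp
  set c := algebraMap R A r with hc
  have hzc : ∀ k : ℕ, z ^ k * c ^ k = 1 := fun k => by rw [← mul_pow, h, one_pow]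
  have hzn : z ^ n = -∑ i ∈ Finset.range n, algebraMap R A (p.coeff i) * z ^ i :=
    eq_neg_of_add_eq_zero_left hp
  have hsucc : n - 1 + 1 = n := Nat.succ_pred_eq_of_pos hn1
  have hz_eq : z = z ^ n * c ^ (n - 1) := by
    calc z = z * (z ^ (n - 1) * c ^ (n - 1)) := by rw [hzc, mul_one]
    _ = z ^ (n - 1 + 1) * c ^ (n - 1) := by ring
    _ = z ^ n * c ^ (n - 1) := by rw [hsucc]
  refine ⟨-∑ i ∈ Finset.range n, p.coeff i * r ^ (n - 1 - i), ?_⟩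
  rw [hz_eq, hzn, neg_mul, Finset.sum_mul, map_neg, map_sum]
  congr 1
  refine Finset.sum_congr rfl fun i hi => ?_
  have hin : i < n := Finset.mem_range.mp hi
  have hiadd : i + (n - 1 - i) = n - 1 := by omega
  calc algebraMap R A (p.coeff i * r ^ (n - 1 - i))
      = algebraMap R A (p.coeff i) * c ^ (n - 1 - i) := by rw [map_mul, map_pow]
    _ = algebraMap R A (p.coeff i) * (z ^ i * c ^ i) * c ^ (n - 1 - i) := by
        rw [hzc, mul_one]
    _ = algebraMap R A (p.coeff i) * z ^ i * (c ^ i * c ^ (n - 1 - i)) := by ring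
    _ = algebraMap R A (p.coeff i) * z ^ i * c ^ (n - 1) := by
        rw [← pow_add, hiadd]

/-- Remark `R:omega`: if `R` is not Gorenstein then `R:ω = m:ω` and
`R:ω` is a module over `B = m:m`. (Since `R ⊆ ω ⊆ R̄`, `R` is Gorenstein exactly when
`ω = R`.) -/


theorem stmt6 (R : Type*) [CommRing R] [IsLocalRing R] [IsNoetherianRing R]
    (hdim : ringKrullDim R = 1)
    (hCM : ∃ x ∈ maximalIdeal R, x ∈ nonZeroDivisors R)
    (hres : Infinite (ResidueField R))
    (ω : Submodule R (FractionRing R))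
    (hω : IsCanonicalIdeal R (FractionRing R) ω) (hω1 : 1 ≤ ω)
    (hω2 : ω ≤ intCl R (FractionRing R))
    (hnotGor : ω ≠ 1) :
    (1 : Submodule R (FractionRing R)) / ω = maxSub R (FractionRing R) / ω ∧
      ∀ b ∈ maxSub R (FractionRing R) / maxSub R (FractionRing R),
        ∀ y ∈ (1 : Submodule R (FractionRing R)) / ω,
          b * y ∈ (1 : Submodule R (FractionRing R)) / ω := by
  classical
  have hmax_le_one : maxSub R (FractionRing R) ≤ 1 := by
    rintro x hx
    simp only [maxSub, idealSub, Submodule.mem_map, Algebra.linearMap_apply] at hx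
    obtain ⟨r, -, rfl⟩ := hx
    exact Submodule.mem_one.mpr ⟨r, rfl⟩
  have key : ∀ y ∈ (1 : Submodule R (FractionRing R)) / ω, ∀ z ∈ ω,
      y * z ∈ maxSub R (FractionRing R) := by
    intro y hy z hz
    rw [Submodule.mem_div_iff_forall_mul_mem] at hy
    obtain ⟨r, hr⟩ := Submodule.mem_one.mp (hy z hz)
    by_cases hrm : r ∈ maximalIdeal R
    · simp only [maxSub, idealSub, Submodule.mem_map, Algebra.linearMap_apply]
      exact ⟨r, hrm, hr⟩
    · exfalso
      apply hnotGor
      have hu : IsUnit r := by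
        by_contra hc
        exact hrm (IsLocalRing.mem_maximalIdeal r |>.mpr (mem_nonunits_iff.mpr hc))
      have h1ω : (1 : FractionRing R) ∈ ω := hω1 (Submodule.mem_one.mpr ⟨1, map_one _⟩)
      obtain ⟨t, ht⟩ := Submodule.mem_one.mp (by simpa using hy 1 h1ω)
      obtain ⟨u, rfl⟩ := hu
      have htz : algebraMap R (FractionRing R) t * z = algebraMap R (FractionRing R) ↑u := by
        rw [ht]; exact hr.symm
      have hzinv : z * algebraMap R (FractionRing R) (t * (↑u⁻¹ : R)) = 1 := by
        rw [map_mul]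
        calc z * (algebraMap R (FractionRing R) t * algebraMap R (FractionRing R) (↑u⁻¹ : R))
            = algebraMap R (FractionRing R) t * z * algebraMap R (FractionRing R) (↑u⁻¹ : R) := by
              ring
          _ = algebraMap R (FractionRing R) (↑u : R) * algebraMap R (FractionRing R) (↑u⁻¹ : R) := by
              rw [htz]
          _ = algebraMap R (FractionRing R) ((↑u : R) * (↑u⁻¹ : R)) := (map_mul _ _ _).symm
          _ = 1 := by rw [Units.mul_inv, map_one]
      have hzint : IsIntegral R z := hω2 hz
      obtain ⟨s₀, hs₀⟩ := my_aux_inv_mem hzint hzinv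
      have hinj : Function.Injective (algebraMap R (FractionRing R)) :=
        IsFractionRing.injective R (FractionRing R)
      have ht_unit : IsUnit t := by
        have heq0 : algebraMap R (FractionRing R) (s₀ * (t * (↑u⁻¹ : R)))
            = algebraMap R (FractionRing R) 1 := by
          rw [map_mul, hs₀, hzinv, map_one]
        have heq : s₀ * (t * (↑u⁻¹ : R)) = 1 := hinj heq0
        exact IsUnit.of_mul_eq_one (a := t) ((↑u⁻¹ : R) * s₀) (by linear_combination heq)
      obtain ⟨v, rfl⟩ := ht_unit
      refine le_antisymm ?_ hω1
      intro w hw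
      obtain ⟨s, hs⟩ := Submodule.mem_one.mp (hy w hw)
      have hyw : algebraMap R (FractionRing R) (↑v : R) * w = algebraMap R (FractionRing R) s := by
        rw [ht]; exact hs.symm
      refine Submodule.mem_one.mpr ⟨(↑v⁻¹ : R) * s, ?_⟩
      rw [map_mul, ← hyw, ← mul_assoc, ← map_mul, Units.inv_mul, map_one, one_mul]
  refine ⟨le_antisymm ?_ ?_, ?_⟩
  · intro y hy
    rw [Submodule.mem_div_iff_forall_mul_mem]
    exact fun z hz => key y hy z hz
  · intro y hy
    rw [Submodule.mem_div_iff_forall_mul_mem] at hy ⊢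
    exact fun z hz => hmax_le_one (hy z hz)
  · intro b hb y hy
    rw [Submodule.mem_div_iff_forall_mul_mem] at hb ⊢
    intro z hz
    have h2 : b * (y * z) ∈ maxSub R (FractionRing R) := hb _ (key y hy z hz)
    have h3 : b * y * z = b * (y * z) := by ring
    rw [h3]
    exact hmax_le_one h2
end
end

section
/- Let (R, m, k) be a one-dimensional Cohen–Macaulay local ring with infinite residue field admitting a canonical module ω_R with R ⊆ ω_R ⊆ R̄. If R is not a DVR, then (R:ω_R):m = m:m if and only if R is almost Gorenstein. Consequently, every almost Gorenstein one-dimensional Cohen–Macaulay local ring is gAGL. -/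
/- Common definitions: fractional ideals in the total ring of fractions, canonical
ideals (via the Herzog–Kunz criterion), reductions, (almost) canonical ideals and
(almost) Gorenstein rings, for one-dimensional Cohen–Macaulay rings.
Throughout, the total ring of fractions `Q(R)` is `FractionRing R` and fractional
ideals are submodules of it. -/

set_option maxHeartbeats 1600000
set_option synthInstance.maxHeartbeats 800000

noncomputable section

open IsLocalRing Submodule

variable (T A : Type*) [CommRing T] [CommRing A] [Algebra T A]

/-- The `Localization S`-algebra structure on `LocalizedModule S A` (a global instance in the
older Mathlib, `LocalizedModule.algebra`), built on the standard module structure. -/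
instance localizedModuleAlgebraOld {R : Type*} [CommRing R] {S : Submonoid R} {B : Type*}
    [CommRing B] [Algebra R B] : Algebra (Localization S) (LocalizedModule S B) :=
  Algebra.ofModule
    (fun x p q => by
      refine Localization.induction_on x ?_
      rintro ⟨r, s⟩
      refine LocalizedModule.induction_on (fun a t => ?_) p
      refine LocalizedModule.induction_on (fun b u => ?_) q
      simp only [LocalizedModule.mk_smul_mk, LocalizedModule.mk_mul_mk, smul_mul_assoc, mul_assoc])
    (fun x p q => by
      refine Localization.induction_on x ?_
      rintro ⟨r, s⟩
      refine LocalizedModule.induction_on (fun a t => ?_) p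
      refine LocalizedModule.induction_on (fun b u => ?_) q
      simp only [LocalizedModule.mk_smul_mk, LocalizedModule.mk_mul_mk, mul_smul_comm]
      rw [mul_left_comm])

lemma aux_dvr (R : Type*) [CommRing R] [IsLocalRing R] [IsNoetherianRing R]
    [Nontrivial R] (t : R) (ht : t ∈ maximalIdeal R) (z : FractionRing R)
    (hz1 : algebraMap R (FractionRing R) t * z = 1)
    (hz2 : ∀ s ∈ maximalIdeal R,
      z * algebraMap R (FractionRing R) s ∈ (1 : Submodule R (FractionRing R))) :
    IsDVR R := by
  set f := algebraMap R (FractionRing R) with hf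
  have hinj : Function.Injective f := IsFractionRing.injective R (FractionRing R)
  have hspan : maximalIdeal R = Ideal.span {t} := by
    refine le_antisymm ?_ ((Ideal.span_singleton_le_iff_mem _).mpr ht)
    intro s hs
    obtain ⟨v, hv⟩ := Submodule.mem_one.mp (hz2 s hs)
    have hv' : f v = z * f s := hv
    have h1 : f (t * v) = f s := by
      rw [map_mul, hv', ← mul_assoc, hz1, one_mul]
    exact Ideal.mem_span_singleton.mpr ⟨v, (hinj h1).symm⟩
  have htnzd : t ∈ nonZeroDivisors R := by
    rw [mem_nonZeroDivisors_iff_right]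
    intro a ha
    have h0 : f (a * t) * z = 0 := by rw [ha, map_zero, zero_mul]
    rw [map_mul, mul_assoc, hz1, mul_one] at h0
    exact hinj (by rw [h0, map_zero])
  have ht0 : t ≠ 0 := fun h => one_ne_zero (mem_nonZeroDivisors_iff_right.mp htnzd 1 (by rw [h, mul_zero]))
  have key : ∀ x : R, x ≠ 0 → ∃ (n : ℕ) (a : R), IsUnit a ∧ x = a * t ^ n := by
    intro x hx
    classical
    have hbot : ⨅ i : ℕ, (maximalIdeal R) ^ i = ⊥ :=
      Ideal.iInf_pow_eq_bot_of_isLocalRing (maximalIdeal R) (Ideal.IsMaximal.ne_top (maximalIdeal.isMaximal R))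
    have hP : ∃ n : ℕ, x ∉ (maximalIdeal R) ^ n := by
      by_contra hc
      push_neg at hc
      exact hx (by simpa [hbot] using Ideal.mem_iInf.mpr hc)
    have hn0pos : Nat.find hP ≠ 0 := by
      intro h
      have hsp := Nat.find_spec hP
      rw [h, pow_zero, Ideal.one_eq_top] at hsp
      exact hsp Submodule.mem_top
    obtain ⟨n, hn⟩ := Nat.exists_eq_succ_of_ne_zero hn0pos
    have hxn : x ∈ (maximalIdeal R) ^ n := by
      have h2 := Nat.find_min hP (m := n) (by omega)
      rwa [not_not] at h2
    have hxn1 : x ∉ (maximalIdeal R) ^ (n + 1) := by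
      have h3 := Nat.find_spec hP
      rwa [hn] at h3
    rw [hspan, Ideal.span_singleton_pow, Ideal.mem_span_singleton'] at hxn
    obtain ⟨a, ha⟩ := hxn
    refine ⟨n, a, ?_, ha.symm⟩
    by_contra hu
    have ham : a ∈ maximalIdeal R := hu
    rw [hspan, Ideal.mem_span_singleton'] at ham
    obtain ⟨b, hb⟩ := ham
    apply hxn1
    rw [hspan, Ideal.span_singleton_pow, Ideal.mem_span_singleton']
    exact ⟨b, by rw [← ha, ← hb]; ring⟩
  have hnzd : NoZeroDivisors R := by
    constructor
    intro x y hxy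
    by_contra hc
    push_neg at hc
    obtain ⟨hx, hy⟩ := hc
    obtain ⟨n, a, hau, rfl⟩ := key x hx
    obtain ⟨m, b, hbu, rfl⟩ := key y hy
    have h1 : (a * b) * t ^ (n + m) = 0 := by rw [← hxy]; ring
    have h2 : a * b = 0 := mem_nonZeroDivisors_iff_right.mp (pow_mem htnzd (n + m)) _ h1
    exact (hau.mul hbu).ne_zero h2
  haveI : IsDomain R := NoZeroDivisors.to_isDomain R
  have hnf : ¬ IsField R := by
    intro hfield
    have := IsLocalRing.isField_iff_maximalIdeal_eq.mp hfield
    rw [this] at ht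
    exact ht0 ht
  have hdvr : IsDiscreteValuationRing R :=
    ((IsDiscreteValuationRing.TFAE R hnf).out 4 0).mp (⟨⟨t, hspan⟩⟩ : (maximalIdeal R).IsPrincipal)
  exact ⟨‹IsDomain R›, hdvr⟩

lemma aux_dvr' (R : Type*) [CommRing R] [IsLocalRing R] [IsNoetherianRing R]
    [Nontrivial R] (t : R) (ht : t ∈ maximalIdeal R) (y : FractionRing R)
    (hy : ∀ s ∈ maximalIdeal R,
      y * algebraMap R (FractionRing R) s ∈ (1 : Submodule R (FractionRing R)))
    (r : R) (hr : IsUnit r)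
    (hry : algebraMap R (FractionRing R) r = algebraMap R (FractionRing R) t * y) :
    IsDVR R := by
  set f := algebraMap R (FractionRing R) with hf
  obtain ⟨v, hv⟩ := hr.exists_right_inv
  refine aux_dvr R t ht (y * f v) ?_ ?_
  · rw [← mul_assoc, ← hry, ← map_mul, hv, map_one]
  · intro s hs
    have h1 : (y * f v) * f s = v • (y * f s) := by
      rw [Algebra.smul_def]; ring
    rw [h1]
    exact Submodule.smul_mem _ v (hy s hs)

lemma mem_maxSub_iff {R : Type*} [CommRing R] [IsLocalRing R] {x : FractionRing R} :
    x ∈ maxSub R (FractionRing R) ↔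
      ∃ s ∈ maximalIdeal R, algebraMap R (FractionRing R) s = x := by
  simp only [maxSub, idealSub, Submodule.mem_map, Algebra.linearMap_apply]

lemma maxSub_le_one {R : Type*} [CommRing R] [IsLocalRing R] :
    maxSub R (FractionRing R) ≤ (1 : Submodule R (FractionRing R)) := by
  intro x hx
  obtain ⟨s, _, rfl⟩ := mem_maxSub_iff.mp hx
  exact Submodule.mem_one.mpr ⟨s, rfl⟩

lemma aux_L (R : Type*) [CommRing R] [IsLocalRing R] [IsNoetherianRing R]
    [Nontrivial R] (hndvr : ¬ IsDVR R) :
    (1 : Submodule R (FractionRing R)) / maxSub R (FractionRing R) =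
      maxSub R (FractionRing R) / maxSub R (FractionRing R) := by
  set f := algebraMap R (FractionRing R) with hf
  refine le_antisymm ?_ ?_
  · intro x hx
    rw [Submodule.mem_div_iff_forall_mul_mem] at hx ⊢
    by_contra hc
    push_neg at hc
    obtain ⟨w, hw, hxw⟩ := hc
    obtain ⟨t, ht, rfl⟩ := mem_maxSub_iff.mp hw
    obtain ⟨u, hu⟩ := Submodule.mem_one.mp (hx _ hw)
    have hum : u ∉ maximalIdeal R := by
      intro h
      exact hxw (by rw [← hu]; exact mem_maxSub_iff.mpr ⟨u, h, rfl⟩)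
    have hunit : IsUnit u := by
      by_contra h
      exact hum ((IsLocalRing.mem_maximalIdeal u).mpr h)
    refine hndvr (aux_dvr' R t ht x ?_ u hunit (by rw [hu, mul_comm]))
    intro s hs
    exact hx _ (mem_maxSub_iff.mpr ⟨s, hs, rfl⟩)
  · intro x hx
    rw [Submodule.mem_div_iff_forall_mul_mem] at hx ⊢
    exact fun y hy => maxSub_le_one (hx y hy)

/-- Remark `Almost Gorenstein are gAGL`: if `R` is not a DVR then
`(R:ω):m = m:m` iff `R` is almost Gorenstein; consequently every almost Gorenstein
one-dimensional Cohen–Macaulay local ring is gAGL. -/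
theorem stmt7 (R : Type*) [CommRing R] [IsLocalRing R] [IsNoetherianRing R]
    (hdim : ringKrullDim R = 1)
    (hCM : ∃ x ∈ maximalIdeal R, x ∈ nonZeroDivisors R)
    (hres : Infinite (ResidueField R))
    (ω : Submodule R (FractionRing R))
    (hω : IsCanonicalIdeal R (FractionRing R) ω) (hω1 : 1 ≤ ω)
    (hω2 : ω ≤ intCl R (FractionRing R))
    (B : Subalgebra R (FractionRing R))
    (hB : Subalgebra.toSubmodule B = maxSub R (FractionRing R) / maxSub R (FractionRing R)) :
    (¬ IsDVR R →
      (((1 : Submodule R (FractionRing R)) / ω) / maxSub R (FractionRing R) =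
          maxSub R (FractionRing R) / maxSub R (FractionRing R) ↔
        maxSub R (FractionRing R) * ω ≤ maxSub R (FractionRing R))) ∧
    (maxSub R (FractionRing R) * ω ≤ maxSub R (FractionRing R) → IsGAGL R ω B) := by
    classical
  haveI : Nontrivial (ResidueField R) := inferInstance
  haveI : Nontrivial R := (residue R).domain_nontrivial
  set A := FractionRing R with hA
  set f := algebraMap R A with hf
  set m' : Submodule R A := maxSub R A with hm'
  constructor
  · intro hndvr
    constructor
    · intro E
      -- From E, derive m' * ω ≤ 1
      have h1 : (1 : A) ∈ m' / m' := by
        rw [Submodule.mem_div_iff_forall_mul_mem]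
        intro y hy
        rwa [one_mul]
      rw [← E] at h1
      have h2 : m' * ω ≤ 1 := by
        refine Submodule.mul_le.mpr fun a ha b hb => ?_
        have h3 : (1 : A) * a ∈ (1 : Submodule R A) / ω :=
          Submodule.mem_div_iff_forall_mul_mem.mp h1 a ha
        rw [one_mul] at h3
        exact Submodule.mem_div_iff_forall_mul_mem.mp h3 b hb
      set G : Set R := {r : R | ∃ s ∈ maximalIdeal R, ∃ y ∈ ω, f r = f s * y} with hG
      by_cases hGm : G ⊆ (maximalIdeal R : Set R)
      · refine Submodule.mul_le.mpr fun a ha b hb => ?_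
        obtain ⟨s, hs, rfl⟩ := mem_maxSub_iff.mp ha
        obtain ⟨r, hr⟩ := Submodule.mem_one.mp (h2 (Submodule.mul_mem_mul ha hb))
        have hrG : r ∈ G := ⟨s, hs, b, hb, hr⟩
        rw [← hr]
        exact mem_maxSub_iff.mpr ⟨r, hGm hrG, rfl⟩
      · exfalso
        obtain ⟨r, hrG, hrm⟩ := Set.not_subset.mp hGm
        obtain ⟨s, hs, y, hy, hry⟩ := hrG
        have hunit : IsUnit r := by
          by_contra h
          exact hrm ((IsLocalRing.mem_maximalIdeal r).mpr h)
        refine hndvr (aux_dvr' R s hs y ?_ r hunit hry)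
        intro w hw
        have : f w * y ∈ (1 : Submodule R A) :=
          h2 (Submodule.mul_mem_mul (mem_maxSub_iff.mpr ⟨w, hw, rfl⟩) hy)
        rwa [mul_comm] at this
    · intro h
      refine le_antisymm ?_ ?_
      · intro x hx
        have hx1 : x ∈ (1 : Submodule R A) / m' := by
          rw [Submodule.mem_div_iff_forall_mul_mem] at hx ⊢
          intro y hy
          have h2 : x * y ∈ (1 : Submodule R A) / ω := hx y hy
          have h3 := Submodule.mem_div_iff_forall_mul_mem.mp h2 1
            (hω1 (Submodule.mem_one.mpr ⟨1, map_one _⟩))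
          rwa [mul_one] at h3
        rw [aux_L R hndvr] at hx1
        exact hx1
      · intro x hx
        rw [Submodule.mem_div_iff_forall_mul_mem] at hx ⊢
        intro y hy
        rw [Submodule.mem_div_iff_forall_mul_mem]
        intro w hw
        have h5 : (x * y) * w ∈ m' * ω := Submodule.mul_mem_mul (hx y hy) hw
        exact maxSub_le_one (h h5)
  · intro h
    have hJ : (jacSub ↥B (FractionRing R)).restrictScalars R ≤ Subalgebra.toSubmodule B := by
      intro x hx
      obtain ⟨b, _, rfl⟩ := hx
      exact b.2
    rw [hB] at hJ
    show maxSub R (FractionRing R) * ω * ((jacSub ↥B (FractionRing R)).restrictScalars R) ≤ 1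
    refine le_trans (mul_le_mul' h hJ) ?_
    refine Submodule.mul_le.mpr fun a ha b hb => ?_
    have h6 := Submodule.mem_div_iff_forall_mul_mem.mp hb a ha
    rw [mul_comm]
    exact maxSub_le_one h6
end
end

section
/- Let (R, m, k) be a one-dimensional Cohen–Macaulay local ring with infinite residue field admitting a canonical module ω_R with R ⊆ ω_R ⊆ R̄, and set B = m:m. If R is gAGL, B is local with maximal ideal n, and R/m ≅ B/n, then m² ⊆ R:ω_R². -/
/- Common definitions: fractional ideals in the total ring of fractions, canonical
ideals (via the Herzog–Kunz criterion), reductions, (almost) canonical ideals and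
(almost) Gorenstein rings, for one-dimensional Cohen–Macaulay rings.
Throughout, the total ring of fractions `Q(R)` is `FractionRing R` and fractional
ideals are submodules of it. -/

set_option maxHeartbeats 1600000
set_option synthInstance.maxHeartbeats 800000

noncomputable section

open IsLocalRing Submodule

variable (T A : Type*) [CommRing T] [CommRing A] [Algebra T A]

/-- The `Localization S`-algebra structure on `LocalizedModule S A` (a global instance in the older library). -/
instance locModAlgebra {R : Type*} [CommSemiring R] {S : Submonoid R} {A : Type*} [Semiring A]
    [Algebra R A] : Algebra (Localization S) (LocalizedModule S A) :=
  Algebra.ofModule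
    (fun x p q => by
      induction x using Localization.induction_on with | H x => ?_
      induction p using LocalizedModule.induction_on with | h a s => ?_
      induction q using LocalizedModule.induction_on with | h b t => ?_
      rw [LocalizedModule.mk_mul_mk, LocalizedModule.mk_smul_mk, LocalizedModule.mk_smul_mk,
        LocalizedModule.mk_mul_mk, smul_mul_assoc, mul_assoc])
    (fun x p q => by
      induction x using Localization.induction_on with | H x => ?_
      induction p using LocalizedModule.induction_on with | h a s => ?_
      induction q using LocalizedModule.induction_on with | h b t => ?_
      rw [LocalizedModule.mk_mul_mk, LocalizedModule.mk_smul_mk, LocalizedModule.mk_smul_mk,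
        LocalizedModule.mk_mul_mk, mul_smul_comm, mul_left_comm])

/-- Lemma `R:omega^2`(1): if `R` is gAGL, `B = m:m` is local with maximal
ideal `n` and `R/m ≅ B/n`, then `m² ⊆ R:ω²`. -/
theorem stmt8 (R : Type*) [CommRing R] [IsLocalRing R] [IsNoetherianRing R]
    (hdim : ringKrullDim R = 1)
    (hCM : ∃ x ∈ maximalIdeal R, x ∈ nonZeroDivisors R)
    (hres : Infinite (ResidueField R))
    (ω : Submodule R (FractionRing R))
    (hω : IsCanonicalIdeal R (FractionRing R) ω) (hω1 : 1 ≤ ω)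
    (hω2 : ω ≤ intCl R (FractionRing R))
    (B : Subalgebra R (FractionRing R))
    (hB : Subalgebra.toSubmodule B = maxSub R (FractionRing R) / maxSub R (FractionRing R))
    (hBloc : IsLocalRing ↥B)
    (hresiso : Nonempty (ResidueField R ≃+* @IsLocalRing.ResidueField ↥B _ hBloc))
    (hgagl : IsGAGL R ω B) :
    maxSub R (FractionRing R) * maxSub R (FractionRing R) ≤
      (1 : Submodule R (FractionRing R)) / (ω * ω) := by
    classical
  letI := hBloc
  have hQinj : Function.Injective (algebraMap R (FractionRing R)) :=
    IsFractionRing.injective R (FractionRing R)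
  have hone0 : (1 : FractionRing R) ≠ 0 := by
    intro h
    exact one_ne_zero
      (hQinj (show algebraMap R (FractionRing R) 1 = algebraMap R (FractionRing R) 0 by
        simpa using h))
  set M := maxSub R (FractionRing R) with hMdef
  set Rbar := intCl R (FractionRing R) with hRbardef
  set N := (jacSub ↥B (FractionRing R)).restrictScalars R with hNdef
  have hg : M * ω * N ≤ 1 := hgagl
  -- basic memberships
  have hmemM : ∀ a : R, a ∈ maximalIdeal R → algebraMap R (FractionRing R) a ∈ M := by
    intro a ha
    exact Submodule.mem_map.mpr ⟨a, ha, by simp [Algebra.linearMap_apply]⟩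
  have hMle1 : M ≤ 1 := by
    rintro x hx
    obtain ⟨a, _, rfl⟩ := Submodule.mem_map.mp hx
    exact Submodule.mem_one.mpr ⟨a, by simp [Algebra.linearMap_apply]⟩
  have h1Rbar : (1 : Submodule R (FractionRing R)) ≤ Rbar := by
    rintro x hx
    obtain ⟨y, rfl⟩ := Submodule.mem_one.mp hx
    exact isIntegral_algebraMap
  have hMRbar : M ≤ Rbar := le_trans hMle1 h1Rbar
  have hRbarRbar : Rbar * Rbar ≤ Rbar := by
    refine Submodule.mul_le.mpr (fun x hx y hy => ?_)
    rw [hRbardef, intCl] at hx hy ⊢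
    rw [Subalgebra.mem_toSubmodule] at hx hy ⊢
    exact mul_mem hx hy
  have habs : M * Rbar * Rbar ≤ M * Rbar := by
    rw [mul_assoc]
    exact mul_le_mul' le_rfl hRbarRbar
  -- Nakayama : 1 ∉ m R̄
  have hNak : (1 : FractionRing R) ∉ M * Rbar := by
    intro h1
    obtain ⟨T, T', hT, hT', hx⟩ := Submodule.mem_span_mul_finite_of_mem_mul h1
    have hint : ∀ x ∈ (T' : Set (FractionRing R)), IsIntegral R x := by
      intro x hxx
      have h2 : x ∈ Rbar := hT' hxx
      rw [hRbardef, intCl, Subalgebra.mem_toSubmodule] at h2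
      exact h2
    have hfg : (Algebra.adjoin R (T' : Set (FractionRing R))).toSubmodule.FG :=
      fg_adjoin_of_finite T'.finite_toSet hint
    set S := (Algebra.adjoin R (T' : Set (FractionRing R))).toSubmodule with hSdef
    have h1S : (1 : FractionRing R) ∈ maximalIdeal R • S := by
      refine Submodule.span_le.mpr ?_ hx
      rintro z ⟨t, ht, t', ht', rfl⟩
      obtain ⟨a, ha, rfl⟩ := Submodule.mem_map.mp (hT ht)
      have ht'S : t' ∈ S := by
        rw [hSdef, Subalgebra.mem_toSubmodule]
        exact Algebra.subset_adjoin ht'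
      have heq : (Algebra.linearMap R (FractionRing R)) a * t' = a • t' := by
        simp [Algebra.linearMap_apply, Algebra.smul_def]
      show (Algebra.linearMap R (FractionRing R)) a * t' ∈ maximalIdeal R • S
      rw [heq]
      exact Submodule.smul_mem_smul ha ht'S
    have hmulS : ∀ s ∈ S, ∀ z ∈ maximalIdeal R • S, s * z ∈ maximalIdeal R • S := by
      intro s hs z hz
      refine Submodule.smul_induction_on hz ?_ ?_
      · intro a ha t ht
        rw [mul_smul_comm]
        refine Submodule.smul_mem_smul ha ?_
        rw [hSdef, Subalgebra.mem_toSubmodule] at hs ht ⊢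
        exact mul_mem hs ht
      · intro x y hx' hy'
        rw [mul_add]
        exact Submodule.add_mem _ hx' hy'
    have hle : S ≤ maximalIdeal R • S := by
      intro s hs
      have := hmulS s hs 1 h1S
      rwa [mul_one] at this
    have hjac : maximalIdeal R ≤ Ideal.jacobson (⊥ : Ideal R) := by
      rw [IsLocalRing.jacobson_eq_maximalIdeal (⊥ : Ideal R) bot_ne_top]
    have hbot := Submodule.eq_bot_of_le_smul_of_le_jacobson_bot (maximalIdeal R) S hfg hle hjac
    have h1mem : (1 : FractionRing R) ∈ S := by
      rw [hSdef, Subalgebra.mem_toSubmodule]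
      exact Subalgebra.one_mem _
    rw [hbot, Submodule.mem_bot] at h1mem
    exact hone0 h1mem
  -- B consists of integral elements
  obtain ⟨c, hcm, hcnzd⟩ := hCM
  have hcu : IsUnit (algebraMap R (FractionRing R) c) :=
    IsLocalization.map_units (FractionRing R) (⟨c, hcnzd⟩ : nonZeroDivisors R)
  obtain ⟨w, hw⟩ := hcu
  have hBsub_le : Subalgebra.toSubmodule B ≤ Submodule.span R {((w⁻¹ : (FractionRing R)ˣ) : FractionRing R)} := by
    intro x hx
    rw [hB, Submodule.mem_div_iff_forall_mul_mem] at hx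
    have hxc : x * algebraMap R (FractionRing R) c ∈ M := hx _ (hmemM c hcm)
    obtain ⟨r, hr⟩ := Submodule.mem_one.mp (hMle1 hxc)
    refine Submodule.mem_span_singleton.mpr ⟨r, ?_⟩
    have : x = algebraMap R (FractionRing R) r * ((w⁻¹ : (FractionRing R)ˣ) : FractionRing R) := by
      rw [hr, ← hw]
      rw [mul_assoc, Units.mul_inv, mul_one]
    rw [this, Algebra.smul_def]
  haveI hspanNoeth : IsNoetherian R
      ↥(Submodule.span R {((w⁻¹ : (FractionRing R)ˣ) : FractionRing R)}) :=
    isNoetherian_of_fg_of_noetherian _ (Submodule.fg_span_singleton _)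
  have hBnoeth : IsNoetherian R ↥(Subalgebra.toSubmodule B) := isNoetherian_of_le hBsub_le
  have hBint : ∀ x : FractionRing R, x ∈ B → x ∈ Rbar := by
    intro x hx
    rw [hRbardef, intCl, Subalgebra.mem_toSubmodule]
    exact isIntegral_of_submodule_noetherian B hBnoeth x hx
  -- key: an element of m R̄ which lies in B lies in n (the image of J(B))
  have hkey : ∀ x : FractionRing R, x ∈ M * Rbar → x ∈ B → x ∈ N := by
    intro x hxMR hxB
    have hnotunit : ¬ IsUnit (⟨x, hxB⟩ : ↥B) := by
      intro hu
      obtain ⟨u, hu⟩ := hu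
      set binv : ↥B := ((u⁻¹ : (↥B)ˣ) : ↥B) with hbinv
      have hinv : (binv : FractionRing R) ∈ Rbar := hBint _ binv.2
      have h1eq : x * (binv : FractionRing R) = 1 := by
        have h3 : ((↑u * ↑(u⁻¹) : ↥B) : FractionRing R) = 1 := by
          rw [Units.mul_inv]; rfl
        rw [← h3, hbinv]
        push_cast
        rw [hu]
      have : (1 : FractionRing R) ∈ M * Rbar := by
        rw [← h1eq]
        exact habs (Submodule.mul_mem_mul hxMR hinv)
      exact hNak this
    have hmem_n : (⟨x, hxB⟩ : ↥B) ∈ maximalIdeal ↥B :=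
      (IsLocalRing.mem_maximalIdeal _).mpr hnotunit
    rw [hNdef, Submodule.restrictScalars_mem, jacSub,
      IsLocalRing.jacobson_eq_maximalIdeal (⊥ : Ideal ↥B) bot_ne_top]
    exact Submodule.mem_map.mpr ⟨⟨x, hxB⟩, hmem_n, rfl⟩
  -- m ⊆ n
  have hMN : M ≤ N := by
    intro x hx
    have hx1 : x ∈ M * Rbar := by
      have : x ∈ M * 1 := by rwa [mul_one]
      exact mul_le_mul' le_rfl h1Rbar this
    obtain ⟨a, _, rfl⟩ := Submodule.mem_map.mp hx
    refine hkey _ hx1 ?_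
    show algebraMap R (FractionRing R) a ∈ B
    exact Subalgebra.algebraMap_mem B a
  -- m ω ⊆ n
  have hMKN : M * ω ≤ N := by
    intro y hy
    have hyMR : y ∈ M * Rbar := mul_le_mul' le_rfl hω2 hy
    have hyν : ∀ ν ∈ N, y * ν ∈ (1 : Submodule R (FractionRing R)) := by
      intro ν hν
      exact hg (Submodule.mul_mem_mul hy hν)
    have hyB : y ∈ B := by
      rw [← Subalgebra.mem_toSubmodule, hB, Submodule.mem_div_iff_forall_mul_mem]
      intro a ha
      have haN : a ∈ N := hMN ha
      obtain ⟨r, hr⟩ := Submodule.mem_one.mp (hyν a haN)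
      have hrm : r ∈ maximalIdeal R := by
        by_contra hru
        have hru' : IsUnit r := IsLocalRing.notMem_maximalIdeal.mp hru
        obtain ⟨v, hv⟩ := hru'
        have h1eq : (y * a) * algebraMap R (FractionRing R) ((↑(v⁻¹) : R)) = 1 := by
          rw [← hr, ← map_mul, ← hv, ← Units.val_mul, mul_inv_cancel, Units.val_one, map_one]
        have hya : y * a ∈ M * Rbar := by
          have h1 : y * a ∈ (M * Rbar) * M := Submodule.mul_mem_mul hyMR ha
          have h2 : (M * Rbar) * M ≤ M * Rbar * Rbar := mul_le_mul' le_rfl hMRbar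
          exact habs (h2 h1)
        have : (1 : FractionRing R) ∈ M * Rbar := by
          rw [← h1eq]
          exact habs (Submodule.mul_mem_mul hya (h1Rbar (Submodule.mem_one.mpr ⟨_, rfl⟩)))
        exact hNak this
      rw [← hr]
      exact hmemM r hrm
    exact hkey y hyMR hyB
  -- conclusion
  have hfinal : M * M * (ω * ω) ≤ 1 := by
    have heq : M * M * (ω * ω) = (M * ω) * (M * ω) := by ring
    rw [heq]
    calc (M * ω) * (M * ω) ≤ (M * ω) * N := mul_le_mul' le_rfl hMKN
      _ = M * ω * N := rfl
      _ ≤ 1 := hg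
  intro x hx
  rw [Submodule.mem_div_iff_forall_mul_mem]
  intro z hz
  exact hfinal (Submodule.mul_mem_mul hx hz)
end
end

section
/- Let (R, m, k) be a one-dimensional Cohen–Macaulay local ring with infinite residue field admitting a canonical module ω_R with R ⊆ ω_R ⊆ R̄. If α ∈ m satisfies α m = m² and R is not almost Gorenstein, then α ∉ R:ω_R. -/
/- Common definitions: fractional ideals in the total ring of fractions, canonical
ideals (via the Herzog–Kunz criterion), reductions, (almost) canonical ideals and
(almost) Gorenstein rings, for one-dimensional Cohen–Macaulay rings.
Throughout, the total ring of fractions `Q(R)` is `FractionRing R` and fractional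
ideals are submodules of it. -/

set_option maxHeartbeats 1600000
set_option synthInstance.maxHeartbeats 800000

noncomputable section

open IsLocalRing Submodule

/-- The `Localization S`-algebra structure on `LocalizedModule S A` (a global instance,
`LocalizedModule.algebra`, in older Mathlib). -/
noncomputable instance localizedModuleAlgebraLoc {R₀ A₀ : Type*} [CommRing R₀] [CommRing A₀]
    [Algebra R₀ A₀] (S : Submonoid R₀) : Algebra (Localization S) (LocalizedModule S A₀) :=
  Algebra.ofModule
    (fun x p q => by
      induction x using Localization.induction_on with | H x => _
      induction p, q using LocalizedModule.induction_on₂ with | _ a s b t => _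
      obtain ⟨r, u⟩ := x
      simp only [LocalizedModule.mk_smul_mk, LocalizedModule.mk_mul_mk, smul_mul_assoc, mul_assoc])
    (fun x p q => by
      induction x using Localization.induction_on with | H x => _
      induction p, q using LocalizedModule.induction_on₂ with | _ a s b t => _
      obtain ⟨r, u⟩ := x
      simp only [LocalizedModule.mk_smul_mk, LocalizedModule.mk_mul_mk, mul_smul_comm, mul_left_comm])

variable (T A : Type*) [CommRing T] [CommRing A] [Algebra T A]

/-- If an element of the maximal ideal becomes, in some algebra, a unit whose inverse is
integral, we get a contradiction (by Nakayama on `R[γ]`). -/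
lemma aux_not_unit_inv_integral (R A : Type*) [CommRing R] [CommRing A] [Nontrivial A]
    [Algebra R A] [IsLocalRing R] (α : R) (hα : α ∈ maximalIdeal R)
    (γ : A) (hint : IsIntegral R γ) (hprod : γ * algebraMap R A α = 1) : False := by
  set N : Submodule R A := Subalgebra.toSubmodule (Algebra.adjoin R {γ}) with hN
  have hfg : N.FG := hint.fg_adjoin_singleton
  have hle : N ≤ maximalIdeal R • N := by
    intro n hn
    have hyn : γ * n ∈ N := by
      exact (Algebra.adjoin R {γ}).mul_mem (Algebra.self_mem_adjoin_singleton R γ) hn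
    have : n = α • (γ * n) := by
      rw [Algebra.smul_def]
      calc n = 1 * n := (one_mul n).symm
        _ = γ * algebraMap R A α * n := by rw [hprod]
        _ = algebraMap R A α * (γ * n) := by ring
    rw [this]
    exact Submodule.smul_mem_smul hα hyn
  have hbot : N = ⊥ := by
    refine Submodule.eq_bot_of_le_smul_of_le_jacobson_bot (maximalIdeal R) N hfg hle ?_
    rw [IsLocalRing.jacobson_eq_maximalIdeal ⊥ bot_ne_top]
  have h1 : (1 : A) ∈ N := (Algebra.adjoin R {γ}).one_mem
  rw [hbot] at h1
  simp only [Submodule.mem_bot] at h1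
  exact one_ne_zero h1

/-- Lemma `R:omega^2`(3): if `α m = m²` and `R` is not almost
Gorenstein, then `α ∉ R:ω`. -/
theorem stmt10 (R : Type*) [CommRing R] [IsLocalRing R] [IsNoetherianRing R]
    (hdim : ringKrullDim R = 1)
    (hCM : ∃ x ∈ maximalIdeal R, x ∈ nonZeroDivisors R)
    (hres : Infinite (ResidueField R))
    (ω : Submodule R (FractionRing R))
    (hω : IsCanonicalIdeal R (FractionRing R) ω) (hω1 : 1 ≤ ω)
    (hω2 : ω ≤ intCl R (FractionRing R))
    (α : R) (hα : α ∈ maximalIdeal R)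
    (hmin : Ideal.span {α} * maximalIdeal R = maximalIdeal R ^ 2)
    (hnotAG : ¬ maxSub R (FractionRing R) * ω ≤ maxSub R (FractionRing R)) :
    algebraMap R (FractionRing R) α ∉ (1 : Submodule R (FractionRing R)) / ω := by
  intro hcontra
  set Q := FractionRing R
  set f := algebraMap R Q with hf
  have hinj : Function.Injective f := IsFractionRing.injective R Q
  -- α is a nonzerodivisor
  obtain ⟨x, hxm, hxreg⟩ := hCM
  have hαreg : α ∈ nonZeroDivisors R := by
    have hx2 : x ^ 2 ∈ Ideal.span {α} * maximalIdeal R := by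
      rw [hmin, sq]; exact sq x ▸ Ideal.mul_mem_mul hxm hxm
    obtain ⟨y, -, hy⟩ := Ideal.mem_span_singleton_mul.mp hx2
    rw [mem_nonZeroDivisors_iff_right]
    intro b hb
    have : b * x ^ 2 = 0 := by
      rw [← hy, ← mul_assoc, hb, zero_mul]
    exact (mem_nonZeroDivisors_iff_right.mp hxreg) _ ((mem_nonZeroDivisors_iff_right.mp hxreg) _ (by rwa [sq, ← mul_assoc] at this))
  have hαunit : IsUnit (f α) :=
    IsLocalization.map_units Q (⟨α, hαreg⟩ : nonZeroDivisors R)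
  -- key claim : α • ω ⊆ image of m
  have key : ∀ w ∈ ω, ∃ r ∈ maximalIdeal R, f r = f α * w := by
    intro w hw
    have h1 : f α * w ∈ (1 : Submodule R Q) :=
      Submodule.mem_div_iff_forall_mul_mem.mp hcontra w hw
    obtain ⟨r, hr⟩ := Submodule.mem_one.mp h1
    refine ⟨r, ?_, hr⟩
    by_contra hru
    have hru' : IsUnit r := not_not.mp (by simpa [IsLocalRing.mem_maximalIdeal] using hru)
    obtain ⟨u, rfl⟩ := hru'
    set γ : Q := w * f ((u⁻¹ : Rˣ) : R) with hγ
    have hγint : IsIntegral R γ := by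
      have hwi : w ∈ integralClosure R Q := hω2 hw
      have : γ ∈ integralClosure R Q :=
        (integralClosure R Q).mul_mem hwi ((integralClosure R Q).algebraMap_mem _)
      exact this
    refine aux_not_unit_inv_integral R Q α hα γ hγint ?_
    have : f ((u⁻¹ : Rˣ) : R) * f ((u : Rˣ) : R) = 1 := by
      rw [← map_mul]; norm_num
    calc γ * f α = f ((u⁻¹ : Rˣ) : R) * (f α * w) := by ring
      _ = f ((u⁻¹ : Rˣ) : R) * f ((u : Rˣ) : R) := by rw [← hr]
      _ = 1 := this
  -- now show mω ⊆ m
  apply hnotAG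
  rw [Submodule.mul_le]
  rintro z hz w hw
  obtain ⟨a, ham, rfl⟩ := hz
  obtain ⟨r, hrm, hr⟩ := key w hw
  have har : a * r ∈ Ideal.span {α} * maximalIdeal R := by
    rw [hmin, sq]; exact Ideal.mul_mem_mul ham hrm
  obtain ⟨s, hsm, hs⟩ := Ideal.mem_span_singleton_mul.mp har
  have hcross : f α * (Algebra.linearMap R Q a * w) = f α * f s := by
    have : Algebra.linearMap R Q a * (f α * w) = f (a * r) := by
      rw [← hr, map_mul, Algebra.linearMap_apply]
    calc f α * (Algebra.linearMap R Q a * w) = Algebra.linearMap R Q a * (f α * w) := by ring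
      _ = f (a * r) := this
      _ = f (α * s) := by rw [← hs]
      _ = f α * f s := by rw [map_mul]
  have : Algebra.linearMap R Q a * w = f s := hαunit.mul_left_cancel hcross
  rw [this]
  exact ⟨s, hsm, rfl⟩
end
end
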